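/- Under the LATE assumptions together with EMCO (D(1)>D(0) implies D(0)=0 almost surely), the recoded Wald estimand equals a weighted average of extensive-margin treatment effects: (E[Y|Z=1]−E[Y|Z=0])/(P(D>0|Z=1)−P(D>0|Z=0)) = Σ_{d=1}^{D̄} ω_d · E[Y(d)−Y(0) | D(1)=d, D(0)=0], where ω_d = P(D(1)=d, D(0)=0)/P(D(1)>0, D(0)=0). -/

import Mathlib

open MeasureTheory ProbabilityTheory

variable {Ω : Type*}

/-- probability of a set -/
noncomputable def pr [MeasurableSpace Ω] (μ : MeasureTheory.Measure Ω) (A : Set Ω) : ℝ :=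
  (μ A).toReal

/-- conditional probability P(A | B) -/
noncomputable def cP [MeasurableSpace Ω] (μ : MeasureTheory.Measure Ω) (A B : Set Ω) : ℝ :=
  pr μ (A ∩ B) / pr μ B

/-- conditional expectation E[f | B] -/
noncomputable def cE [MeasurableSpace Ω] (μ : MeasureTheory.Measure Ω) (f : Ω → ℝ) (B : Set Ω) : ℝ :=
  (∫ ω in B, f ω ∂μ) / pr μ B

/-- observed treatment D = Z·D(1) + (1−Z)·D(0) -/
def obsD (Z D0 D1 : Ω → ℕ) : Ω → ℕ := fun ω => if Z ω = 1 then D1 ω else D0 ω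

/-- observed outcome Y = Y(D) -/
noncomputable def obsY (Z D0 D1 : Ω → ℕ) (Yp : ℕ → Ω → ℝ) : Ω → ℝ :=
  fun ω => Yp (obsD Z D0 D1 ω) ω

lemma indep_key [MeasurableSpace Ω] (μ : Measure Ω) [IsProbabilityMeasure μ]
    (X : Ω → ℕ × ℕ × (ℕ → ℝ)) (Z : Ω → ℕ) (hindep : IndepFun X Z μ) (hZm : Measurable Z)
    (f : ℕ × ℕ × (ℕ → ℝ) → ℝ) (hf : Measurable f)
    (hint : Integrable (fun ω => f (X ω)) μ) (z : ℕ) :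
    ∫ ω in {ω | Z ω = z}, f (X ω) ∂μ = (∫ ω, f (X ω) ∂μ) * pr μ {ω | Z ω = z} := by
  classical
  set ψ : ℕ → ℝ := fun n => if n = z then 1 else 0 with hψdef
  have hψ : Measurable ψ := measurable_from_top
  have hZset : MeasurableSet {ω | Z ω = z} := hZm (measurableSet_singleton z)
  have hcompI : IndepFun (f ∘ X) (ψ ∘ Z) μ := hindep.comp hf hψ
  have hψind : (fun ω => ψ (Z ω)) = Set.indicator {ω | Z ω = z} (fun _ => (1:ℝ)) := by
    funext ω
    by_cases h : Z ω = z <;> simp [hψdef, Set.indicator_apply, Set.mem_setOf_eq, h]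
  have hψint : Integrable (fun ω => ψ (Z ω)) μ := by
    rw [hψind]; exact (integrable_const 1).indicator hZset
  have hmul := hcompI.integral_mul_eq_mul_integral hint.aestronglyMeasurable hψint.aestronglyMeasurable
  have h1 : ∫ ω, ((f ∘ X) * (ψ ∘ Z)) ω ∂μ = ∫ ω in {ω | Z ω = z}, f (X ω) ∂μ := by
    rw [← integral_indicator hZset]
    congr 1
    funext ω
    by_cases h : Z ω = z <;>
      simp [hψdef, Set.indicator_apply, Set.mem_setOf_eq, h, Function.comp]
  have h2 : ∫ ω, (ψ ∘ Z) ω ∂μ = pr μ {ω | Z ω = z} := by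
    show (∫ ω, ψ (Z ω) ∂μ) = _
    rw [hψind, integral_indicator_const (1:ℝ) hZset]
    simp [pr, Measure.real]
  calc ∫ ω in {ω | Z ω = z}, f (X ω) ∂μ = ∫ ω, ((f ∘ X) * (ψ ∘ Z)) ω ∂μ := h1.symm
    _ = (∫ ω, f (X ω) ∂μ) * pr μ {ω | Z ω = z} := by
        rw [hmul] at *
        rw [← h2]; rfl

/-- under EMCO the recoded Wald estimand is a weighted average of
extensive-margin treatment effects. -/
theorem recoded_wald_emco
    [MeasurableSpace Ω] (μ : MeasureTheory.Measure Ω) [IsProbabilityMeasure μ]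
    (Dbar : ℕ) (Z D0 D1 : Ω → ℕ) (Yp : ℕ → Ω → ℝ)
    (hZ01 : ∀ ω, Z ω = 0 ∨ Z ω = 1)
    (hZm : Measurable Z) (hD0m : Measurable D0) (hD1m : Measurable D1)
    (hD0b : ∀ ω, D0 ω ≤ Dbar) (hD1b : ∀ ω, D1 ω ≤ Dbar)
    (hYm : ∀ d, Measurable (Yp d)) (hYint : ∀ d, Integrable (Yp d) μ)
    (hindep : IndepFun (fun ω => (D0 ω, D1 ω, fun d => Yp d ω)) Z μ)
    (hmono : ∀ᵐ ω ∂μ, D0 ω ≤ D1 ω)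
    (hemco : ∀ᵐ ω ∂μ, D0 ω < D1 ω → D0 ω = 0)
    (hZ1pos : 0 < pr μ {ω | Z ω = 1}) (hZ1lt : pr μ {ω | Z ω = 1} < 1)
    (hcomp : 0 < pr μ {ω | D0 ω < D1 ω}) :
    (cE μ (obsY Z D0 D1 Yp) {ω | Z ω = 1} - cE μ (obsY Z D0 D1 Yp) {ω | Z ω = 0}) /
      (cP μ {ω | 0 < obsD Z D0 D1 ω} {ω | Z ω = 1} -
        cP μ {ω | 0 < obsD Z D0 D1 ω} {ω | Z ω = 0}) =
    ∑ d ∈ Finset.Icc 1 Dbar,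
      (pr μ {ω | D1 ω = d ∧ D0 ω = 0} / pr μ {ω | 0 < D1 ω ∧ D0 ω = 0}) *
        cE μ (fun ω => Yp d ω - Yp 0 ω) {ω | D1 ω = d ∧ D0 ω = 0} := by
  classical
  set X : Ω → ℕ × ℕ × (ℕ → ℝ) := fun ω => (D0 ω, D1 ω, fun d => Yp d ω) with hXdef
  set S1 : Set Ω := {ω | Z ω = 1} with hS1def
  set S0 : Set Ω := {ω | Z ω = 0} with hS0def
  set B : Set Ω := {ω | 0 < D1 ω ∧ D0 ω = 0} with hBdef
  have hS1meas : MeasurableSet S1 := hZm (measurableSet_singleton 1)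
  have hS0meas : MeasurableSet S0 := hZm (measurableSet_singleton 0)
  -- positivity of P(Z=0)
  have hS0compl : S0 = S1ᶜ := by
    ext ω; rcases hZ01 ω with h | h <;> simp [hS0def, hS1def, h]
  have hS0pr : pr μ S0 = 1 - pr μ S1 := by
    rw [hS0compl, pr, prob_compl_eq_one_sub hS1meas,
      ENNReal.toReal_sub_of_le prob_le_one (by simp)]
    simp [pr]
  have hS0pos : 0 < pr μ S0 := by rw [hS0pr]; linarith
  -- indicator decompositions
  set φ1 : ℕ → ℕ × ℕ × (ℕ → ℝ) → ℝ := fun d p => if p.2.1 = d then p.2.2 d else 0 with hφ1def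
  set φ0 : ℕ → ℕ × ℕ × (ℕ → ℝ) → ℝ := fun d p => if p.1 = d then p.2.2 d else 0 with hφ0def
  have hφ1m : ∀ d, Measurable (φ1 d) := by
    intro d
    exact Measurable.ite ((measurable_fst.comp measurable_snd) (measurableSet_singleton d))
      ((measurable_pi_apply d).comp (measurable_snd.comp measurable_snd)) measurable_const
  have hφ0m : ∀ d, Measurable (φ0 d) := by
    intro d
    exact Measurable.ite (measurable_fst (measurableSet_singleton d))
      ((measurable_pi_apply d).comp (measurable_snd.comp measurable_snd)) measurable_const
  have hφ1int : ∀ d, Integrable (fun ω => φ1 d (X ω)) μ := by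
    intro d
    have : (fun ω => φ1 d (X ω)) = Set.indicator {ω | D1 ω = d} (Yp d) := by
      funext ω
      by_cases h : D1 ω = d <;>
        simp [hφ1def, hXdef, Set.indicator_apply, Set.mem_setOf_eq, h]
    rw [this]; exact (hYint d).indicator (hD1m (measurableSet_singleton d))
  have hφ0int : ∀ d, Integrable (fun ω => φ0 d (X ω)) μ := by
    intro d
    have : (fun ω => φ0 d (X ω)) = Set.indicator {ω | D0 ω = d} (Yp d) := by
      funext ω
      by_cases h : D0 ω = d <;>
        simp [hφ0def, hXdef, Set.indicator_apply, Set.mem_setOf_eq, h]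
    rw [this]; exact (hYint d).indicator (hD0m (measurableSet_singleton d))
  have hf1sum : ∀ ω, Yp (D1 ω) ω = ∑ d ∈ Finset.range (Dbar+1), φ1 d (X ω) := by
    intro ω
    simp only [hφ1def, hXdef]
    rw [Finset.sum_ite_eq]
    simp [Nat.lt_succ_iff.mpr (hD1b ω)]
  have hf0sum : ∀ ω, Yp (D0 ω) ω = ∑ d ∈ Finset.range (Dbar+1), φ0 d (X ω) := by
    intro ω
    simp only [hφ0def, hXdef]
    rw [Finset.sum_ite_eq]
    simp [Nat.lt_succ_iff.mpr (hD0b ω)]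
  have hf1int : Integrable (fun ω => Yp (D1 ω) ω) μ := by
    have : (fun ω => Yp (D1 ω) ω) = fun ω => ∑ d ∈ Finset.range (Dbar+1), φ1 d (X ω) := by
      funext ω; exact hf1sum ω
    rw [this]; exact integrable_finset_sum _ (fun d _ => hφ1int d)
  have hf0int : Integrable (fun ω => Yp (D0 ω) ω) μ := by
    have : (fun ω => Yp (D0 ω) ω) = fun ω => ∑ d ∈ Finset.range (Dbar+1), φ0 d (X ω) := by
      funext ω; exact hf0sum ω
    rw [this]; exact integrable_finset_sum _ (fun d _ => hφ0int d)
  -- conditional expectations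
  have hcE1 : cE μ (obsY Z D0 D1 Yp) S1 = ∫ ω, Yp (D1 ω) ω ∂μ := by
    have hOn : ∫ ω in S1, obsY Z D0 D1 Yp ω ∂μ = ∫ ω in S1, Yp (D1 ω) ω ∂μ := by
      refine setIntegral_congr_fun hS1meas (fun ω hω => ?_)
      have hz : Z ω = 1 := hω
      simp [obsY, obsD, hz]
    have key1 : ∫ ω in S1, Yp (D1 ω) ω ∂μ = (∫ ω, Yp (D1 ω) ω ∂μ) * pr μ S1 := by
      calc ∫ ω in S1, Yp (D1 ω) ω ∂μ
          = ∫ ω in S1, ∑ d ∈ Finset.range (Dbar+1), φ1 d (X ω) ∂μ :=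
            setIntegral_congr_fun hS1meas (fun ω _ => hf1sum ω)
        _ = ∑ d ∈ Finset.range (Dbar+1), ∫ ω in S1, φ1 d (X ω) ∂μ :=
            integral_finset_sum _ (fun d _ => (hφ1int d).restrict)
        _ = ∑ d ∈ Finset.range (Dbar+1), (∫ ω, φ1 d (X ω) ∂μ) * pr μ S1 :=
            Finset.sum_congr rfl (fun d _ =>
              indep_key μ X Z hindep hZm (φ1 d) (hφ1m d) (hφ1int d) 1)
        _ = (∑ d ∈ Finset.range (Dbar+1), ∫ ω, φ1 d (X ω) ∂μ) * pr μ S1 :=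
            (Finset.sum_mul _ _ _).symm
        _ = (∫ ω, ∑ d ∈ Finset.range (Dbar+1), φ1 d (X ω) ∂μ) * pr μ S1 := by
            rw [integral_finset_sum _ (fun d _ => hφ1int d)]
        _ = (∫ ω, Yp (D1 ω) ω ∂μ) * pr μ S1 := by
            congr 1
            exact integral_congr_ae (Filter.Eventually.of_forall (fun ω => (hf1sum ω).symm))
    simp only [cE]
    rw [hOn, key1, mul_div_assoc, div_self (ne_of_gt hZ1pos), mul_one]
  have hcE0 : cE μ (obsY Z D0 D1 Yp) S0 = ∫ ω, Yp (D0 ω) ω ∂μ := by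
    have hOn : ∫ ω in S0, obsY Z D0 D1 Yp ω ∂μ = ∫ ω in S0, Yp (D0 ω) ω ∂μ := by
      refine setIntegral_congr_fun hS0meas (fun ω hω => ?_)
      have hz : Z ω = 0 := hω
      simp [obsY, obsD, hz]
    have key0 : ∫ ω in S0, Yp (D0 ω) ω ∂μ = (∫ ω, Yp (D0 ω) ω ∂μ) * pr μ S0 := by
      calc ∫ ω in S0, Yp (D0 ω) ω ∂μ
          = ∫ ω in S0, ∑ d ∈ Finset.range (Dbar+1), φ0 d (X ω) ∂μ :=
            setIntegral_congr_fun hS0meas (fun ω _ => hf0sum ω)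
        _ = ∑ d ∈ Finset.range (Dbar+1), ∫ ω in S0, φ0 d (X ω) ∂μ :=
            integral_finset_sum _ (fun d _ => (hφ0int d).restrict)
        _ = ∑ d ∈ Finset.range (Dbar+1), (∫ ω, φ0 d (X ω) ∂μ) * pr μ S0 :=
            Finset.sum_congr rfl (fun d _ =>
              indep_key μ X Z hindep hZm (φ0 d) (hφ0m d) (hφ0int d) 0)
        _ = (∑ d ∈ Finset.range (Dbar+1), ∫ ω, φ0 d (X ω) ∂μ) * pr μ S0 :=
            (Finset.sum_mul _ _ _).symm
        _ = (∫ ω, ∑ d ∈ Finset.range (Dbar+1), φ0 d (X ω) ∂μ) * pr μ S0 := by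
            rw [integral_finset_sum _ (fun d _ => hφ0int d)]
        _ = (∫ ω, Yp (D0 ω) ω ∂μ) * pr μ S0 := by
            congr 1
            exact integral_congr_ae (Filter.Eventually.of_forall (fun ω => (hf0sum ω).symm))
    simp only [cE]
    rw [hOn, key0, mul_div_assoc, div_self (ne_of_gt hS0pos), mul_one]
  -- conditional probabilities
  have hm1 : MeasurableSet {p : ℕ × ℕ × (ℕ → ℝ) | 0 < p.2.1} :=
    (measurable_fst.comp measurable_snd) (show MeasurableSet {n : ℕ | 0 < n} from trivial)
  have hm0 : MeasurableSet {p : ℕ × ℕ × (ℕ → ℝ) | 0 < p.1} :=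
    measurable_fst (show MeasurableSet {n : ℕ | 0 < n} from trivial)
  have hcP1 : cP μ {ω | 0 < obsD Z D0 D1 ω} S1 = pr μ {ω | 0 < D1 ω} := by
    have hset : {ω | 0 < obsD Z D0 D1 ω} ∩ S1 =
        X ⁻¹' {p | 0 < p.2.1} ∩ Z ⁻¹' {1} := by
      ext ω
      by_cases h : Z ω = 1 <;>
        simp [obsD, hS1def, h, hXdef, Set.mem_setOf_eq]
    simp only [cP, pr]
    rw [hset, hindep.measure_inter_preimage_eq_mul _ _ hm1 (measurableSet_singleton 1)]
    have hpre : X ⁻¹' {p | 0 < p.2.1} = {ω | 0 < D1 ω} := rfl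
    have hpre2 : Z ⁻¹' {1} = S1 := rfl
    rw [hpre, hpre2, ENNReal.toReal_mul]
    exact mul_div_cancel_right₀ _ (ne_of_gt hZ1pos)
  have hcP0 : cP μ {ω | 0 < obsD Z D0 D1 ω} S0 = pr μ {ω | 0 < D0 ω} := by
    have hset : {ω | 0 < obsD Z D0 D1 ω} ∩ S0 =
        X ⁻¹' {p | 0 < p.1} ∩ Z ⁻¹' {0} := by
      ext ω
      by_cases h : Z ω = 1 <;>
        simp [obsD, hS0def, h, hXdef, Set.mem_setOf_eq]
    simp only [cP, pr]
    rw [hset, hindep.measure_inter_preimage_eq_mul _ _ hm0 (measurableSet_singleton 0)]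
    have hpre : X ⁻¹' {p | 0 < p.1} = {ω | 0 < D0 ω} := rfl
    have hpre2 : Z ⁻¹' {0} = S0 := rfl
    rw [hpre, hpre2, ENNReal.toReal_mul]
    exact mul_div_cancel_right₀ _ (ne_of_gt hS0pos)
  -- denominator identity
  have hBmeas : MeasurableSet B :=
    (hD1m (show MeasurableSet {n : ℕ | 0 < n} from trivial)).inter
      (hD0m (measurableSet_singleton 0))
  have hden : pr μ {ω | 0 < D1 ω} - pr μ {ω | 0 < D0 ω} = pr μ B := by
    have hdisj : Disjoint {ω | 0 < D0 ω} B := by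
      rw [Set.disjoint_left]
      rintro ω h ⟨_, h0⟩
      simp only [Set.mem_setOf_eq] at h
      omega
    have hU : μ {ω | 0 < D1 ω} = μ ({ω | 0 < D0 ω} ∪ B) := by
      apply measure_congr
      rw [Filter.eventuallyEq_set]
      filter_upwards [hmono] with ω hm
      simp only [Set.mem_union, Set.mem_setOf_eq, hBdef]
      constructor
      · intro h1
        by_cases h0 : D0 ω = 0
        · exact Or.inr ⟨h1, h0⟩
        · exact Or.inl (Nat.pos_of_ne_zero h0)
      · rintro (h | ⟨h, _⟩)
        · exact lt_of_lt_of_le h hm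
        · exact h
    have hadd : μ ({ω | 0 < D0 ω} ∪ B) = μ {ω | 0 < D0 ω} + μ B :=
      measure_union hdisj hBmeas
    simp only [pr]
    rw [hU, hadd, ENNReal.toReal_add (measure_ne_top μ _) (measure_ne_top μ _)]
    ring
  have hBpos : 0 < pr μ B := by
    have heq : μ {ω | D0 ω < D1 ω} = μ B := by
      apply measure_congr
      rw [Filter.eventuallyEq_set]
      filter_upwards [hemco] with ω he
      simp only [Set.mem_setOf_eq, hBdef]
      constructor
      · intro h
        have h0 := he h
        exact ⟨by omega, h0⟩
      · rintro ⟨h1, h0⟩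
        omega
    have := hcomp
    rw [pr, heq] at this
    exact this
  -- numerator identity
  have hnum : (∫ ω, Yp (D1 ω) ω ∂μ) - (∫ ω, Yp (D0 ω) ω ∂μ) =
      ∑ d ∈ Finset.Icc 1 Dbar, ∫ ω in {ω | D1 ω = d ∧ D0 ω = 0}, (Yp d ω - Yp 0 ω) ∂μ := by
    have hAmeas : ∀ d : ℕ, MeasurableSet {ω | D1 ω = d ∧ D0 ω = 0} := fun d =>
      (hD1m (measurableSet_singleton d)).inter (hD0m (measurableSet_singleton 0))
    have hae : (fun ω => Yp (D1 ω) ω - Yp (D0 ω) ω) =ᵐ[μ]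
        (fun ω => ∑ d ∈ Finset.Icc 1 Dbar,
          Set.indicator {ω | D1 ω = d ∧ D0 ω = 0} (fun ω => Yp d ω - Yp 0 ω) ω) := by
      filter_upwards [hmono, hemco] with ω hm he
      rcases eq_or_lt_of_le hm with heq | hlt
      · rw [← heq, sub_self]
        refine (Finset.sum_eq_zero (fun d hd => ?_)).symm
        refine Set.indicator_of_notMem ?_ _
        rintro ⟨hd1, hd0⟩
        have := Finset.mem_Icc.mp hd
        omega
      · have h0 : D0 ω = 0 := he hlt
        have hmem : D1 ω ∈ Finset.Icc 1 Dbar := Finset.mem_Icc.mpr ⟨by omega, hD1b ω⟩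
        have hterm : ∀ d ∈ Finset.Icc 1 Dbar,
            Set.indicator {ω | D1 ω = d ∧ D0 ω = 0} (fun ω => Yp d ω - Yp 0 ω) ω =
              if D1 ω = d then Yp d ω - Yp 0 ω else 0 := by
          intro d _
          by_cases hh : D1 ω = d <;>
            simp [Set.indicator_apply, Set.mem_setOf_eq, hh, h0]
        rw [Finset.sum_congr rfl hterm, Finset.sum_ite_eq]
        simp [hmem, h0]
    calc (∫ ω, Yp (D1 ω) ω ∂μ) - (∫ ω, Yp (D0 ω) ω ∂μ)
        = ∫ ω, (Yp (D1 ω) ω - Yp (D0 ω) ω) ∂μ := (integral_sub hf1int hf0int).symm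
      _ = ∫ ω, (∑ d ∈ Finset.Icc 1 Dbar,
            Set.indicator {ω | D1 ω = d ∧ D0 ω = 0} (fun ω => Yp d ω - Yp 0 ω) ω) ∂μ :=
          integral_congr_ae hae
      _ = ∑ d ∈ Finset.Icc 1 Dbar, ∫ ω,
            Set.indicator {ω | D1 ω = d ∧ D0 ω = 0} (fun ω => Yp d ω - Yp 0 ω) ω ∂μ :=
          integral_finset_sum _ (fun d _ => ((hYint d).sub (hYint 0)).indicator (hAmeas d))
      _ = ∑ d ∈ Finset.Icc 1 Dbar, ∫ ω in {ω | D1 ω = d ∧ D0 ω = 0}, (Yp d ω - Yp 0 ω) ∂μ :=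
          Finset.sum_congr rfl (fun d _ => integral_indicator (hAmeas d))
  -- conclusion
  rw [hcE1, hcE0, hcP1, hcP0, hden, hnum]
  rw [Finset.sum_div]
  refine Finset.sum_congr rfl (fun d _ => ?_)
  simp only [cE]
  by_cases hA : pr μ {ω | D1 ω = d ∧ D0 ω = 0} = 0
  · have hμA : μ {ω | D1 ω = d ∧ D0 ω = 0} = 0 := by
      have := (ENNReal.toReal_eq_zero_iff _).mp hA
      rcases this with h | h
      · exact h
      · exact absurd h (measure_ne_top μ _)
    have hz : ∫ ω in {ω | D1 ω = d ∧ D0 ω = 0}, (Yp d ω - Yp 0 ω) ∂μ = 0 := by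
      rw [Measure.restrict_eq_zero.mpr hμA, integral_zero_measure]
    rw [hz, hA]
    simp
  · field_simp
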